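/- If f is continuous on S¹ and f(θ₀) = 0 for some θ₀, then the Toeplitz operator T_f is not Fredholm. -/

import Mathlib

open ContinuousLinearMap

/-- A bounded operator on a (complex) Hilbert space is *Fredholm* if there exists a
bounded operator `B` such that `1 - F * B` and `1 - B * F` are compact. -/
def IsFredholm {H : Type*} [NormedAddCommGroup H] [InnerProductSpace ℂ H]
    (F : H →L[ℂ] H) : Prop :=
  ∃ B : H →L[ℂ] H,
    IsCompactOperator (⇑(1 - F * B)) ∧ IsCompactOperator (⇑(1 - B * F))

/-- The Fredholm index `Index F = dim Ker F - dim Ker F†`. -/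
noncomputable def fredholmIndex {H : Type*} [NormedAddCommGroup H]
    [InnerProductSpace ℂ H] [CompleteSpace H] (F : H →L[ℂ] H) : ℤ :=
  (Module.finrank ℂ (LinearMap.ker (F : H →ₗ[ℂ] H)) : ℤ) -
    (Module.finrank ℂ (LinearMap.ker (ContinuousLinearMap.adjoint F : H →ₗ[ℂ] H)) : ℤ)

open MeasureTheory AddCircle

noncomputable section

instance : Fact (0 < 2 * Real.pi) := ⟨by positivity⟩

/-- `L²(S¹)` where `S¹ = ℝ/2πℤ`, with normalized Haar measure. -/
abbrev L2 : Type := Lp ℂ 2 (@haarAddCircle (2 * Real.pi) _)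

/-- The Hardy space `H ⊂ L²(S¹)`: the closed span of the Fourier modes `e_n`, `n ≥ 0`. -/
def Hardy : Submodule ℂ L2 :=
  (Submodule.span ℂ (Set.range fun n : ℕ => (fourierLp 2 (n : ℤ) : L2))).topologicalClosure

instance : CompleteSpace Hardy := (Submodule.isClosed_topologicalClosure _).completeSpace_coe

/-- The orthogonal projection `P : L²(S¹) → H`. -/
def hardyProj : L2 →L[ℂ] Hardy := Submodule.orthogonalProjectionOnto Hardy

/-- `M` is the operator of pointwise multiplication by `f` on `L²(S¹)`. -/
def IsMulBy (M : L2 →L[ℂ] L2) (f : AddCircle (2 * Real.pi) → ℂ) : Prop :=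
  ∀ ψ : L2, (M ψ : AddCircle (2 * Real.pi) → ℂ)
      =ᵐ[@haarAddCircle (2 * Real.pi) _] fun x => f x * ψ x

/-- `T` is the Toeplitz operator with symbol `f`: `T ψ = P (f ψ)` for `ψ ∈ H`. -/
def IsToeplitz (T : Hardy →L[ℂ] Hardy) (f : AddCircle (2 * Real.pi) → ℂ) : Prop :=
  ∃ M : L2 →L[ℂ] L2, IsMulBy M f ∧ ∀ ψ : Hardy, T ψ = hardyProj (M ψ)

open Filter Topology
open scoped Pointwise
local notation "S¹" => AddCircle (2 * Real.pi)
local notation "μh" => (@haarAddCircle (2 * Real.pi) _)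
local notation "⟪" x ", " y "⟫" => @inner ℂ _ _ x y

/-- Compact operators send weakly null (bounded) sequences to norm-null sequences. -/
lemma compact_tendsto_zero {H : Type*} [NormedAddCommGroup H] [InnerProductSpace ℂ H]
    [CompleteSpace H] (K : H →L[ℂ] H) (hK : IsCompactOperator ⇑K) (x : ℕ → H)
    (hb : ∀ j, ‖x j‖ ≤ 2)
    (hw : ∀ u : H, Tendsto (fun j => ⟪u, x j⟫) atTop (𝓝 0)) :
    Tendsto (fun j => K (x j)) atTop (𝓝 0) := by
  obtain ⟨V, hVc, hVn⟩ := hK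
  obtain ⟨r, hr, hball⟩ := Metric.mem_nhds_iff.mp hVn
  set z : ℂ := ((r / 3 : ℝ) : ℂ) with hz
  have hzpos : (0:ℝ) < r / 3 := by positivity
  have hzne : z ≠ 0 := by
    simp only [hz, ne_eq, Complex.ofReal_eq_zero]
    exact ne_of_gt hzpos
  have hmem : ∀ j, K (x j) ∈ z⁻¹ • V := by
    intro j
    rw [Set.mem_smul_set_iff_inv_smul_mem₀ (inv_ne_zero hzne), inv_inv]
    have h1 : z • x j ∈ Metric.ball (0 : H) r := by
      rw [mem_ball_zero_iff, norm_smul]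
      have : ‖z‖ = r / 3 := by
        rw [hz, Complex.norm_real, Real.norm_eq_abs, abs_of_pos hzpos]
      rw [this]
      nlinarith [hb j, norm_nonneg (x j)]
    have h2 := hball h1
    rwa [Set.mem_preimage, K.map_smul] at h2
  have hVc' : IsCompact (z⁻¹ • V) := hVc.smul _
  refine Filter.tendsto_of_subseq_tendsto fun ns hns => ?_
  obtain ⟨a, haV, φ, hφ, hlim⟩ := hVc'.tendsto_subseq (fun n => hmem (ns n))
  have h1 : Tendsto (fun n => ⟪a, K (x (ns (φ n)))⟫) atTop (𝓝 ⟪a, a⟫) :=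
    Filter.Tendsto.inner tendsto_const_nhds hlim
  have h2 : Tendsto (fun j => ⟪a, K (x j)⟫) atTop (𝓝 0) := by
    have h3 := hw (ContinuousLinearMap.adjoint K a)
    refine h3.congr fun j => ?_
    exact ContinuousLinearMap.adjoint_inner_left K (x j) a
  have hcomp : Tendsto (fun n => ns (φ n)) atTop atTop := hns.comp hφ.tendsto_atTop
  have h4 := h2.comp hcomp
  have ha0 : a = 0 := inner_self_eq_zero.mp (tendsto_nhds_unique h1 h4)
  exact ⟨φ, by simpa [ha0, Function.comp_def] using hlim⟩

lemma Lp_coeFn_sum {ι : Type*} (s : Finset ι) (g : ι → L2) :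
    ((∑ i ∈ s, g i : L2) : S¹ → ℂ) =ᵐ[μh] fun x => ∑ i ∈ s, (g i : S¹ → ℂ) x := by
  classical
  induction s using Finset.induction_on with
  | empty => simp only [Finset.sum_empty]; exact MeasureTheory.Lp.coeFn_zero ℂ 2 μh
  | insert _ _ h ih =>
    rename_i a s
    rw [Finset.sum_insert h]
    filter_upwards [MeasureTheory.Lp.coeFn_add (g a) (∑ i ∈ s, g i), ih] with x h1 h2
    rw [Finset.sum_insert h, h1, Pi.add_apply, h2]

lemma fourierLp_mem_Hardy {m : ℤ} (hm : 0 ≤ m) : (fourierLp 2 m : L2) ∈ Hardy := by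
  apply Submodule.le_topologicalClosure
  apply Submodule.subset_span
  exact ⟨m.toNat, by simp [Int.toNat_of_nonneg hm]⟩


/-- High-frequency bounded sequences are weakly null. -/
lemma weaknull_L2 (ψ : ℕ → L2) (hb : ∀ j, ‖ψ j‖ ≤ 2)
    (horth : ∀ (j : ℕ) (a : ℤ), a < (j : ℤ) → ⟪(fourierLp 2 a : L2), ψ j⟫ = 0) :
    ∀ u : L2, Tendsto (fun j => ⟪u, ψ j⟫) atTop (𝓝 0) := by
  intro u
  rw [Metric.tendsto_atTop]
  intro η hη
  -- density of trigonometric polynomials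
  have hdense : (Submodule.span ℂ (Set.range (@fourierLp (2*Real.pi) _ 2 _))).topologicalClosure
      = ⊤ := span_fourierLp_closure_eq_top (by norm_num)
  have hcl : u ∈ closure ((Submodule.span ℂ (Set.range (@fourierLp (2*Real.pi) _ 2 _)) :
      Submodule ℂ L2) : Set L2) := by
    rw [← Submodule.topologicalClosure_coe, hdense]
    trivial
  obtain ⟨v, hv_mem, hv_dist⟩ := Metric.mem_closure_iff.mp hcl (η/3) (by positivity)
  rw [SetLike.mem_coe, Finsupp.mem_span_range_iff_exists_finsupp] at hv_mem
  obtain ⟨c, hc⟩ := hv_mem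
  set A : ℤ := if h : c.support.Nonempty then (c.support.max' h) + 1 else 0 with hA
  have hlt : ∀ a ∈ c.support, a < A := by
    intro a ha
    rw [hA, dif_pos ⟨a, ha⟩]
    exact lt_of_le_of_lt (c.support.le_max' a ha) (lt_add_one _)
  refine ⟨A.toNat, fun j hj => ?_⟩
  have hvz : ⟪v, ψ j⟫ = 0 := by
    rw [← hc, Finsupp.sum, sum_inner]
    refine Finset.sum_eq_zero fun a ha => ?_
    rw [inner_smul_left, horth j a ?_, mul_zero]
    calc a < A := hlt a ha
      _ ≤ (A.toNat : ℤ) := Int.self_le_toNat A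
      _ ≤ (j : ℤ) := by exact_mod_cast hj
  have key : ⟪u, ψ j⟫ = ⟪u - v, ψ j⟫ := by
    rw [inner_sub_left, hvz, sub_zero]
  rw [dist_eq_norm, sub_zero, key]
  calc ‖⟪u - v, ψ j⟫‖ ≤ ‖u - v‖ * ‖ψ j‖ := norm_inner_le_norm _ _
    _ ≤ (η/3) * 2 := by
        apply mul_le_mul (le_of_lt (by rwa [dist_eq_norm] at hv_dist)) (hb j)
          (norm_nonneg _) (by positivity)
    _ < η := by linarith


lemma coeFn_sum_smul_fourier (s : Finset ℤ) (c : ℤ → ℂ) (m : ℤ → ℤ) :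
    ((∑ k ∈ s, c k • fourierLp 2 (m k) : L2) : S¹ → ℂ)
      =ᵐ[μh] fun x => ∑ k ∈ s, c k * fourier (m k) x := by
  classical
  induction s using Finset.induction_on with
  | empty => simp only [Finset.sum_empty]; exact MeasureTheory.Lp.coeFn_zero ℂ 2 μh
  | insert _ _ h ih =>
    rename_i a s
    rw [Finset.sum_insert h]
    filter_upwards [MeasureTheory.Lp.coeFn_add (c a • (fourierLp 2 (m a) : L2))
      (∑ k ∈ s, c k • (fourierLp 2 (m k) : L2)),
      MeasureTheory.Lp.coeFn_smul (c a) (fourierLp 2 (m a) : L2),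
      coeFn_fourierLp 2 (m a), ih] with x h1 h2 h3 h4
    rw [h1, Pi.add_apply, h2, Pi.smul_apply, smul_eq_mul, h3, h4, Finset.sum_insert h]

/-- Comparison of norms through the multiplication operator. -/
lemma Mnorm_le {M : L2 →L[ℂ] L2} {f : S¹ → ℂ} (hM : IsMulBy M f) {v w : L2}
    (h : ∀ᵐ x ∂μh, ‖f x * (v : S¹ → ℂ) x‖ ≤ ‖(w : S¹ → ℂ) x‖) : ‖M v‖ ≤ ‖w‖ := by
  rw [MeasureTheory.Lp.norm_def, MeasureTheory.Lp.norm_def]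
  refine ENNReal.toReal_mono (MeasureTheory.Lp.eLpNorm_ne_top w) ?_
  refine eLpNorm_mono_ae ?_
  filter_upwards [hM v, h] with x h1 h2
  rw [h1]
  exact h2

lemma Mnorm_congr {M : L2 →L[ℂ] L2} {f : S¹ → ℂ} (hM : IsMulBy M f) {v w : L2}
    (h : ∀ᵐ x ∂μh, ‖f x * (v : S¹ → ℂ) x‖ = ‖f x * (w : S¹ → ℂ) x‖) : ‖M v‖ = ‖M w‖ := by
  rw [MeasureTheory.Lp.norm_def, MeasureTheory.Lp.norm_def]
  congr 1
  calc eLpNorm (M v : S¹ → ℂ) 2 μh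
      = eLpNorm (fun x => f x * (v : S¹ → ℂ) x) 2 μh := eLpNorm_congr_ae (hM v)
    _ = eLpNorm (fun x => f x * (w : S¹ → ℂ) x) 2 μh := eLpNorm_congr_norm_ae h
    _ = eLpNorm (M w : S¹ → ℂ) 2 μh := (eLpNorm_congr_ae (hM w)).symm

lemma exists_good (f : S¹ → ℂ) (hf : Continuous f) (θ₀ : S¹) (h0 : f θ₀ = 0)
    (M : L2 →L[ℂ] L2) (hM : IsMulBy M f) {ε : ℝ} (hε : 0 < ε) (N : ℕ) :
    ∃ ψ₀ : L2, ψ₀ ∈ Hardy ∧ 1/2 ≤ ‖ψ₀‖ ∧ ‖ψ₀‖ ≤ 2 ∧ ‖M ψ₀‖ ≤ ε ∧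
      (∀ a : ℤ, a < (N : ℤ) → ⟪(fourierLp 2 a : L2), ψ₀⟫ = 0) := by
  classical
  -- a bound for f
  obtain ⟨C, hC1, hC⟩ : ∃ C : ℝ, 1 ≤ C ∧ ∀ x, ‖f x‖ ≤ C := by
    refine ⟨max 1 ‖(⟨f, hf⟩ : C(S¹, ℂ))‖, le_max_left _ _, fun x => ?_⟩
    exact le_trans ((⟨f, hf⟩ : C(S¹, ℂ)).norm_coe_le_norm x) (le_max_right _ _)
  set ε' : ℝ := ε / 4 with hε'def
  have hε' : 0 < ε' := by positivity
  -- continuity at θ₀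
  obtain ⟨δ, hδ, hfδ⟩ := Metric.continuousAt_iff.mp hf.continuousAt ε' hε'
  -- the bump function
  set χ : S¹ → ℂ := fun x => ((max 0 (1 - dist x θ₀ / δ) : ℝ) : ℂ) with hχdef
  have hχcont : Continuous χ := by
    apply Complex.continuous_ofReal.comp
    exact continuous_const.max (continuous_const.sub
      ((continuous_id.dist continuous_const).div_const δ))
  have hχ1 : ∀ x, ‖χ x‖ ≤ 1 := by
    intro x
    rw [hχdef]
    simp only [Complex.norm_real, Real.norm_eq_abs]
    rw [abs_of_nonneg (le_max_left _ _)]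
    apply max_le (by norm_num)
    have : 0 ≤ dist x θ₀ / δ := by positivity
    linarith
  have hχsupp : ∀ x, δ ≤ dist x θ₀ → χ x = 0 := by
    intro x hx
    have h1 : 1 - dist x θ₀ / δ ≤ 0 := by
      have := (one_le_div hδ).mpr hx
      linarith
    show ((max 0 (1 - dist x θ₀ / δ) : ℝ) : ℂ) = 0
    rw [max_eq_left h1]
    norm_num
  have hχθ₀ : χ θ₀ = 1 := by
    rw [hχdef]; norm_num
  have hmemχ : MemLp χ 2 μh := MemLp.of_bound hχcont.aestronglyMeasurable 1
    (Filter.Eventually.of_forall hχ1)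
  set χL : L2 := hmemχ.toLp χ with hχL
  -- positivity of the norm of the bump
  have hχLpos : 0 < ‖χL‖ := by
    rcases (norm_nonneg χL).lt_or_eq with h | h
    · exact h
    · exfalso
      have h1 : χL = 0 := by
        rw [← norm_eq_zero]; exact h.symm
      have h2 : χ =ᵐ[μh] (fun _ => (0:ℂ)) := by
        refine (hmemχ.coeFn_toLp.symm.trans ?_)
        rw [← hχL, h1]
        exact MeasureTheory.Lp.coeFn_zero ℂ 2 μh
      have h3 : χ = fun _ => (0:ℂ) :=
        (Continuous.ae_eq_iff_eq μh hχcont continuous_const).mp h2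
      have := congrFun h3 θ₀
      rw [hχθ₀] at this
      exact one_ne_zero this
  -- pointwise bound for f * χ
  have hfχ : ∀ x, ‖f x * χ x‖ ≤ ε' * ‖χ x‖ := by
    intro x
    rcases lt_or_ge (dist x θ₀) δ with h | h
    · rw [norm_mul]
      have hfx : ‖f x‖ ≤ ε' := by
        have := hfδ h
        rw [h0, dist_zero_right] at this
        exact this.le
      exact mul_le_mul_of_nonneg_right hfx (norm_nonneg _)
    · rw [hχsupp x h, mul_zero, norm_zero]
      positivity
  -- normalized bump
  set χ' : L2 := ((‖χL‖ : ℂ))⁻¹ • χL with hχ'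
  have hχ'norm : ‖χ'‖ = 1 := by
    rw [hχ', norm_smul, norm_inv, Complex.norm_real, Real.norm_eq_abs,
      abs_of_pos hχLpos, inv_mul_cancel₀ (ne_of_gt hχLpos)]
  -- norm bound ‖M χ'‖ ≤ ε'
  have hMχ' : ‖M χ'‖ ≤ ε' := by
    have h := Mnorm_le hM (v := χ') (w := (ε' : ℂ) • χ') ?_
    · rw [norm_smul, Complex.norm_real, Real.norm_eq_abs, abs_of_pos hε', hχ'norm,
        mul_one] at h
      exact h
    · filter_upwards [MeasureTheory.Lp.coeFn_smul ((‖χL‖ : ℂ))⁻¹ χL,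
        MeasureTheory.Lp.coeFn_smul (ε' : ℂ) χ', hmemχ.coeFn_toLp] with x h1 h2 h3
      have hx' : (χ' : S¹ → ℂ) x = ((‖χL‖:ℂ))⁻¹ * χ x := by
        rw [hχ']
        rw [h1]
        simp only [Pi.smul_apply, smul_eq_mul]
        rw [h3]
      have hn : ‖((‖χL‖:ℂ))⁻¹‖ = ‖χL‖⁻¹ := by
        rw [norm_inv, Complex.norm_real, Real.norm_eq_abs, abs_of_pos hχLpos]
      have hε'n : ‖(ε' : ℂ)‖ = ε' := by
        rw [Complex.norm_real, Real.norm_eq_abs, abs_of_pos hε']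
      rw [h2, Pi.smul_apply, smul_eq_mul, hx',
        show f x * (((‖χL‖:ℂ))⁻¹ * χ x) = ((‖χL‖:ℂ))⁻¹ * (f x * χ x) by ring]
      simp only [norm_mul, hn, hε'n]
      have h4 := hfχ x
      rw [norm_mul] at h4
      have hinv : (0:ℝ) ≤ ‖χL‖⁻¹ := by positivity
      nlinarith [norm_nonneg (f x), norm_nonneg (χ x)]
  -- the operator norm bound ‖M v‖ ≤ C ‖v‖
  have hMle : ∀ v : L2, ‖M v‖ ≤ C * ‖v‖ := by
    intro v
    have h := Mnorm_le hM (v := v) (w := (C : ℂ) • v) ?_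
    · rwa [norm_smul, Complex.norm_real, Real.norm_eq_abs,
        abs_of_pos (lt_of_lt_of_le one_pos hC1)] at h
    · filter_upwards [MeasureTheory.Lp.coeFn_smul (C : ℂ) v] with x h1
      rw [h1, Pi.smul_apply, smul_eq_mul, norm_mul, norm_mul, Complex.norm_real,
        Real.norm_eq_abs, abs_of_pos (lt_of_lt_of_le one_pos hC1)]
      exact mul_le_mul_of_nonneg_right (hC x) (norm_nonneg _)
  -- density: approximate χ' by a trigonometric polynomial y
  set η : ℝ := min (1/2) (ε'/C) with hηdef
  have hηpos : 0 < η := lt_min (by norm_num) (by positivity)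
  have hdense : (Submodule.span ℂ (Set.range (@fourierLp (2*Real.pi) _ 2 _))).topologicalClosure
      = ⊤ := span_fourierLp_closure_eq_top (by norm_num)
  have hcl : χ' ∈ closure ((Submodule.span ℂ (Set.range (@fourierLp (2*Real.pi) _ 2 _)) :
      Submodule ℂ L2) : Set L2) := by
    rw [← Submodule.topologicalClosure_coe, hdense]
    trivial
  obtain ⟨y, hy_mem, hy_dist⟩ := Metric.mem_closure_iff.mp hcl η hηpos
  rw [SetLike.mem_coe, Finsupp.mem_span_range_iff_exists_finsupp] at hy_mem
  obtain ⟨c, hc⟩ := hy_mem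
  rw [dist_eq_norm] at hy_dist
  have hyn1 : 1/2 ≤ ‖y‖ := by
    have h1 : ‖χ'‖ - ‖χ' - y‖ ≤ ‖y‖ := by
      have := norm_sub_norm_le χ' y
      have h2 : ‖χ'‖ - ‖y‖ ≤ ‖χ' - y‖ := le_trans (le_abs_self _) (abs_norm_sub_norm_le _ _)
      linarith
    have h3 : ‖χ' - y‖ ≤ 1/2 := le_trans hy_dist.le (min_le_left _ _)
    rw [hχ'norm] at h1
    linarith
  have hyn2 : ‖y‖ ≤ 2 := by
    have h1 : ‖y‖ ≤ ‖χ'‖ + ‖χ' - y‖ := by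
      have := norm_sub_norm_le χ' y
      have h2 := norm_sub_rev χ' y
      calc ‖y‖ = ‖χ' + (y - χ')‖ := by rw [add_sub_cancel]
        _ ≤ ‖χ'‖ + ‖y - χ'‖ := norm_add_le _ _
        _ = ‖χ'‖ + ‖χ' - y‖ := by rw [← norm_sub_rev]
    have h3 : ‖χ' - y‖ ≤ 1/2 := le_trans hy_dist.le (min_le_left _ _)
    rw [hχ'norm] at h1
    linarith
  -- norm bound for M y
  have hMy : ‖M y‖ ≤ 2 * ε' := by
    have h1 : M y = M χ' + M (y - χ') := by
      rw [← map_add]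
      congr 1
      abel
    have h2 : ‖M (y - χ')‖ ≤ C * ‖y - χ'‖ := hMle _
    have h3 : ‖y - χ'‖ ≤ ε'/C := by
      rw [norm_sub_rev]
      exact le_trans hy_dist.le (min_le_right _ _)
    have h4 : C * ‖y - χ'‖ ≤ ε' := by
      have := mul_le_mul_of_nonneg_left h3 (le_trans zero_le_one hC1)
      rwa [mul_div_cancel₀ _ (ne_of_gt (lt_of_lt_of_le one_pos hC1))] at this
    calc ‖M y‖ ≤ ‖M χ'‖ + ‖M (y - χ')‖ := h1 ▸ norm_add_le _ _
      _ ≤ ε' + ε' := add_le_add hMχ' (le_trans h2 h4)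
      _ = 2 * ε' := by ring
  -- the frequency shift
  set Bm : ℤ := if h : c.support.Nonempty then c.support.min' h else 0 with hBm
  set n : ℤ := (N : ℤ) - Bm with hn
  have hnk : ∀ k ∈ c.support, (N : ℤ) ≤ n + k := by
    intro k hk
    have : Bm ≤ k := by
      rw [hBm, dif_pos ⟨k, hk⟩]
      exact c.support.min'_le k hk
    omega
  set ψ₀ : L2 := ∑ k ∈ c.support, c k • (fourierLp 2 (n + k) : L2) with hψ₀
  have hy_sum : y = ∑ k ∈ c.support, c k • (fourierLp 2 k : L2) := by
    rw [← hc]; rfl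
  -- membership in Hardy
  have hmem : ψ₀ ∈ Hardy := by
    apply Submodule.sum_mem
    intro k hk
    exact Submodule.smul_mem _ _ (fourierLp_mem_Hardy (le_trans (Int.ofNat_nonneg N)
      (hnk k hk)))
  -- norm equality ‖ψ₀‖ = ‖y‖
  have hw_on : Orthonormal ℂ (fun k : ℤ => (fourierLp 2 (n + k) : L2)) :=
    orthonormal_fourier.comp (fun k => n + k) (add_right_injective n)
  have hinner_eq : ⟪ψ₀, ψ₀⟫ = ⟪y, y⟫ := by
    rw [hψ₀, hy_sum, hw_on.inner_sum c c, orthonormal_fourier.inner_sum c c]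
  have hnorm_eq : ‖ψ₀‖ = ‖y‖ := by
    rw [@norm_eq_sqrt_re_inner ℂ, @norm_eq_sqrt_re_inner ℂ, hinner_eq]
  -- orthogonality to low modes
  have horth : ∀ a : ℤ, a < (N : ℤ) → ⟪(fourierLp 2 a : L2), ψ₀⟫ = 0 := by
    intro a ha
    rw [hψ₀, inner_sum]
    refine Finset.sum_eq_zero fun k hk => ?_
    have h1 := hnk k hk
    have hne : a ≠ n + k := by omega
    rw [inner_smul_right, orthonormal_fourier.2 hne, mul_zero]
  -- ‖M ψ₀‖ = ‖M y‖
  have hae_ψ₀ : (ψ₀ : S¹ → ℂ) =ᵐ[μh] fun x => fourier n x * (y : S¹ → ℂ) x := by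
    have hsum1 := coeFn_sum_smul_fourier c.support c (fun k => n + k)
    have hsum2 := coeFn_sum_smul_fourier c.support c id
    have hy_ae : (y : S¹ → ℂ) =ᵐ[μh] fun x => ∑ k ∈ c.support, c k * fourier k x := by
      rw [hy_sum]
      exact hsum2
    rw [hψ₀]
    filter_upwards [hsum1, hy_ae] with x h1 h2
    rw [h1, h2, Finset.mul_sum]
    refine Finset.sum_congr rfl fun k _ => ?_
    rw [fourier_add]
    ring
  have hMψ₀ : ‖M ψ₀‖ = ‖M y‖ := by
    apply Mnorm_congr hM
    filter_upwards [hae_ψ₀] with x h1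
    rw [h1, show f x * (fourier n x * (y : S¹ → ℂ) x)
      = fourier n x * (f x * (y : S¹ → ℂ) x) by ring, norm_mul]
    have : ‖fourier n x‖ = 1 := by
      simp [Circle.norm_coe]
    rw [this, one_mul]
  refine ⟨ψ₀, hmem, ?_, ?_, ?_, horth⟩
  · rw [hnorm_eq]; exact hyn1
  · rw [hnorm_eq]; exact hyn2
  · rw [hMψ₀]
    calc ‖M y‖ ≤ 2 * ε' := hMy
      _ ≤ ε := by rw [hε'def]; linarith

set_option maxHeartbeats 1000000
set_option synthInstance.maxHeartbeats 400000

/-- If the continuous symbol `f` vanishes somewhere on the circle,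
then the Toeplitz operator `T_f` is not Fredholm. -/
theorem toeplitz_vanishing_symbol_not_fredholm (f : AddCircle (2 * Real.pi) → ℂ)
    (hf : Continuous f) (θ₀ : AddCircle (2 * Real.pi)) (h0 : f θ₀ = 0)
    (T : Hardy →L[ℂ] Hardy) (hT : IsToeplitz T f) :
    ¬ _root_.IsFredholm T := by
  rintro ⟨B, hK1, hK2⟩
  obtain ⟨M, hM, hTM⟩ := hT
  have hex : ∀ j : ℕ, ∃ ψ₀ : L2, ψ₀ ∈ Hardy ∧ 1/2 ≤ ‖ψ₀‖ ∧ ‖ψ₀‖ ≤ 2 ∧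
      ‖M ψ₀‖ ≤ 1/(j+1) ∧ (∀ a : ℤ, a < (j:ℤ) → ⟪(fourierLp 2 a : L2), ψ₀⟫ = 0) :=
    fun j => exists_good f hf θ₀ h0 M hM (by positivity) j
  choose ψ₀ hmem h1 h2 h3 h4 using hex
  set ψ : ℕ → Hardy := fun j => ⟨ψ₀ j, hmem j⟩ with hψ
  have hnorm : ∀ j, ‖ψ j‖ = ‖ψ₀ j‖ := fun _ => rfl
  -- norm of T (ψ j) is small
  have hTn : ∀ j, ‖T (ψ j)‖ ≤ 1/(j+1) := by
    intro j
    rw [hTM]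
    calc ‖hardyProj (M ↑(ψ j))‖ ≤ 1 * ‖M ↑(ψ j)‖ :=
          ContinuousLinearMap.le_of_opNorm_le _ (Submodule.orthogonalProjectionOnto_norm_le Hardy) _
      _ = ‖M (ψ₀ j)‖ := by rw [one_mul]
      _ ≤ 1/(j+1) := h3 j
  -- the sequence is weakly null
  have hwL2 := weaknull_L2 ψ₀ h2 h4
  have hw : ∀ u : Hardy, Tendsto (fun j => ⟪u, ψ j⟫) atTop (𝓝 0) := by
    intro u
    refine (hwL2 (u : L2)).congr fun j => rfl
  -- compact part tends to zero
  have hKc := compact_tendsto_zero (1 - B * T) hK2 ψ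
    (fun j => by rw [hnorm]; exact h2 j) hw
  -- the remainder also tends to zero
  have hBlim : Tendsto (fun j => B (T (ψ j))) atTop (𝓝 0) := by
    refine squeeze_zero_norm (a := fun j : ℕ => ‖B‖ * (1/(j+1))) (fun j => ?_) ?_
    · calc ‖B (T (ψ j))‖ ≤ ‖B‖ * ‖T (ψ j)‖ := B.le_opNorm _
        _ ≤ ‖B‖ * (1/(j+1)) := mul_le_mul_of_nonneg_left (hTn j) (norm_nonneg B)
    · simpa using tendsto_one_div_add_atTop_nhds_zero_nat.const_mul ‖B‖
  have hsum : Tendsto (fun j => (1 - B * T) (ψ j) + B (T (ψ j))) atTop (𝓝 0) := by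
    simpa only [add_zero] using hKc.add hBlim
  have hid : (fun j => (1 - B * T) (ψ j) + B (T (ψ j))) = fun j => ψ j := by
    funext j
    simp [ContinuousLinearMap.sub_apply, ContinuousLinearMap.mul_apply]
  rw [hid] at hsum
  have hnz : Tendsto (fun j => ‖ψ j‖) atTop (𝓝 0) := by
    simpa using hsum.norm
  have hge : (1:ℝ)/2 ≤ 0 := by
    refine ge_of_tendsto' hnz fun j => ?_
    rw [hnorm]
    exact h1 j
  linarith
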